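/- If M is a finitely generated module and M is A_i-subprojective for every i in an index set I, then M is (⊕_{i∈I} A_i)-subprojective. -/

import Mathlib

open scoped DirectSum

/-- `M` is `N`-subprojective: every homomorphism `M → N` lifts through every
epimorphism onto `N`. -/
def Subprojective (R : Type) [Ring R] (M N : Type) [AddCommGroup M] [Module R M]
    [AddCommGroup N] [Module R N] : Prop :=
  ∀ (B : Type) [AddCommGroup B] [Module R B] (g : B →ₗ[R] N),
    Function.Surjective g → ∀ f : M →ₗ[R] N, ∃ h : M →ₗ[R] B, g ∘ₗ h = f

lemma subproj_aux (R : Type) [Ring R] (M : Type) [AddCommGroup M] [Module R M]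
    (ι : Type) [DecidableEq ι] (A : ι → Type)
    [∀ i, AddCommGroup (A i)] [∀ i, Module R (A i)]
    (hA : ∀ i, Subprojective R M (A i))
    (B : Type) [AddCommGroup B] [Module R B] (g : B →ₗ[R] ⨁ i, A i)
    (hg : Function.Surjective g) (s : Finset ι) :
    ∀ f : M →ₗ[R] ⨁ i, A i,
      (∀ j ∉ s, (DirectSum.component R ι A j) ∘ₗ f = 0) →
      ∃ h : M →ₗ[R] B, g ∘ₗ h = f := by
  classical
  induction s using Finset.induction_on with
  | empty =>
    intro f hf
    refine ⟨0, ?_⟩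
    have hf0 : f = 0 := by
      refine LinearMap.ext fun x => ?_
      refine DFinsupp.ext fun j => ?_
      have := congrArg (fun φ => φ x) (hf j (Finset.notMem_empty j))
      simpa [DirectSum.component, DFinsupp.lapply] using this
    simp [hf0]
  | insert i s' hi ih =>
    intro f hf
    set fi := (DirectSum.component R ι A i) ∘ₗ f with hfi
    set B' := Submodule.comap g (LinearMap.range (DirectSum.lof R ι A i)) with hB'
    have hsurj : Function.Surjective
        ((DirectSum.component R ι A i) ∘ₗ g ∘ₗ B'.subtype) := by
      intro a
      obtain ⟨b, hb⟩ := hg (DirectSum.lof R ι A i a)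
      refine ⟨⟨b, ⟨a, hb.symm⟩⟩, ?_⟩
      simp [hb]
    obtain ⟨h₁, hh₁⟩ := hA i B' _ hsurj fi
    set h₁' := B'.subtype ∘ₗ h₁ with hh₁'
    have hcomp_i : (DirectSum.component R ι A i) ∘ₗ (g ∘ₗ h₁') = fi := by
      rw [← hh₁]; rfl
    have hcomp_ne : ∀ j, j ≠ i →
        (DirectSum.component R ι A j) ∘ₗ (g ∘ₗ h₁') = 0 := by
      intro j hj
      ext x
      obtain ⟨a, ha⟩ := (h₁ x).2
      have : g (h₁' x) = DirectSum.lof R ι A i a := by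
        simpa [hh₁'] using ha.symm
      rw [LinearMap.comp_apply, LinearMap.comp_apply, this, LinearMap.zero_apply,
        DirectSum.component.of]
      exact dif_neg (Ne.symm hj)
    have hsupp : ∀ j ∉ s', (DirectSum.component R ι A j) ∘ₗ (f - g ∘ₗ h₁') = 0 := by
      intro j hj
      by_cases hji : j = i
      · subst hji
        rw [LinearMap.comp_sub, hcomp_i]
        exact sub_eq_zero_of_eq hfi.symm
      · have hjs : j ∉ insert i s' := by simp [hji, hj]
        rw [LinearMap.comp_sub, hf j hjs, hcomp_ne j hji, sub_zero]
    obtain ⟨h₂, hh₂⟩ := ih (f - g ∘ₗ h₁') hsupp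
    refine ⟨h₁' + h₂, ?_⟩
    rw [LinearMap.comp_add, hh₂]
    abel

theorem stmt_9 (R : Type) [Ring R] (M : Type) [AddCommGroup M] [Module R M]
    [Module.Finite R M] (ι : Type) [DecidableEq ι] (A : ι → Type)
    [∀ i, AddCommGroup (A i)] [∀ i, Module R (A i)]
    (hA : ∀ i, Subprojective R M (A i)) :
    Subprojective R M (⨁ i, A i) := by
  classical
  intro B _ _ g hg f
  obtain ⟨S, hS⟩ := Module.Finite.fg_top (R := R) (M := M)
  refine subproj_aux R M ι A hA B g hg (S.biUnion fun x => (f x).support) f ?_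
  intro j hj
  apply LinearMap.ext_on hS
  intro x hx
  have hxj : j ∉ (f x).support := fun h => hj (Finset.mem_biUnion.mpr ⟨x, hx, h⟩)
  simpa [DirectSum.component, DFinsupp.lapply] using
    DFinsupp.notMem_support_iff.mp hxj
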